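/- If h and k are odd positive integers, then T(h,k) = 1 - 2·gcd(h,k). -/

import Mathlib

/-- `T(h,k) := ∑_{j=1}^{2k-1} (-1)^{j+1+⌊hj/k⌋}` (here `h*j/k` is natural-number
division, which agrees with the floor of the rational `hj/k`). -/
def Tpair (h k : ℕ) : ℤ := ∑ j ∈ Finset.Icc 1 (2 * k - 1), (-1 : ℤ) ^ (j + 1 + h * j / k)

theorem stmt_2 (h k : ℕ) (hh : 0 < h) (hk : 0 < k) (hho : Odd h) (hko : Odd k) :
    Tpair h k = 1 - 2 * (Nat.gcd h k : ℤ) := by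
  classical
  set d := Nat.gcd h k with hdef
  have hd0 : 0 < d := Nat.gcd_pos_of_pos_left k hh
  set m := k / d with hmdef
  set h' := h / d with hpdef
  have hmk : d * m = k := Nat.mul_div_cancel' (Nat.gcd_dvd_right h k)
  have hph : d * h' = h := Nat.mul_div_cancel' (Nat.gcd_dvd_left h k)
  have hm0 : 0 < m :=
    Nat.div_pos (Nat.le_of_dvd hk (Nat.gcd_dvd_right h k)) hd0
  have hcop : Nat.Coprime h' m := Nat.coprime_div_gcd_div_gcd hd0
  have hmodd : Odd m := by
    rw [← hmk] at hko
    exact (Nat.odd_mul.mp hko).2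
  have hpodd : Odd h' := by
    rw [← hph] at hho
    exact (Nat.odd_mul.mp hho).2
  -- key divisibility equivalence
  have key : ∀ j : ℕ, k ∣ h * j ↔ m ∣ j := by
    intro j
    constructor
    · intro hdvd
      rw [← hmk, ← hph] at hdvd
      have : d * m ∣ d * (h' * j) := by
        have : d * h' * j = d * (h' * j) := by ring
        rwa [this] at hdvd
      have h2 : m ∣ h' * j := by
        exact (mul_dvd_mul_iff_left (by omega : d ≠ 0)).mp this
      exact hcop.symm.dvd_of_dvd_mul_left h2
    · rintro ⟨t, rfl⟩
      refine ⟨h' * t, ?_⟩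
      rw [← hmk, ← hph]; ring
  set f : ℕ → ℤ := fun j => (-1 : ℤ) ^ (j + 1 + h * j / k) with hfdef
  rw [Tpair, ← Finset.sum_filter_add_sum_filter_not (Finset.Icc 1 (2*k-1))
      (fun j => k ∣ h * j) f]
  have hsum1 : ∑ j ∈ (Finset.Icc 1 (2*k-1)).filter (fun j => k ∣ h * j), f j
      = -((2 * d - 1 : ℕ) : ℤ) := by
    have hconst : ∀ j ∈ (Finset.Icc 1 (2*k-1)).filter (fun j => k ∣ h * j), f j = -1 := by
      intro j hj
      rw [Finset.mem_filter] at hj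
      obtain ⟨t, rfl⟩ := (key j).mp hj.2
      have hdiv : h * (m * t) / k = h' * t := by
        rw [← hph, ← hmk]
        have : d * h' * (m * t) = d * m * (h' * t) := by ring
        rw [this, Nat.mul_div_cancel_left _ (by omega : 0 < d * m)]
      rw [hfdef]
      simp only [hdiv]
      have heven : Even (m * t + h' * t) := by
        have : m * t + h' * t = (m + h') * t := by ring
        rw [this]
        exact (hmodd.add_odd hpodd).mul_right t
      have hodd : Odd (m * t + 1 + h' * t) := by
        rcases heven with ⟨c, hc⟩
        exact ⟨c, by omega⟩
      exact hodd.neg_one_pow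
    rw [Finset.sum_congr rfl hconst, Finset.sum_const]
    have hcard : ((Finset.Icc 1 (2*k-1)).filter (fun j => k ∣ h * j)).card = 2 * d - 1 := by
      have : (Finset.Icc 1 (2*k-1)).filter (fun j => k ∣ h * j)
          = (Finset.Ioc 0 (2*k-1)).filter (fun j => m ∣ j) := by
        rw [← Finset.Icc_add_one_left_eq_Ioc]
        exact Finset.filter_congr (fun j _ => by simpa using key j)
      rw [this, Nat.Ioc_filter_dvd_card_eq_div]
      -- (2*k-1)/m = 2*d-1
      have e : 2 * k - 1 = m * (2 * d - 1) + (m - 1) := by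
        have hkdm : 2 * k = 2 * (d * m) := by rw [hmk]
        zify [hm0, (by omega : 1 ≤ 2 * k), (by omega : 1 ≤ 2 * d)]
        have : (k : ℤ) = (d : ℤ) * m := by exact_mod_cast hmk.symm
        rw [this]; ring
      rw [e, Nat.mul_add_div hm0, Nat.div_eq_of_lt (by omega)]
      omega
    rw [hcard]
    simp
  have hsum2 : ∑ j ∈ (Finset.Icc 1 (2*k-1)).filter (fun j => ¬ k ∣ h * j), f j = 0 := by
    apply Finset.sum_involution (g := fun j _ => 2 * k - j)
    · -- f a + f (g a) = 0
      intro j hj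
      rw [Finset.mem_filter, Finset.mem_Icc] at hj
      obtain ⟨⟨hj1, hj2⟩, hnd⟩ := hj
      set q := h * j / k with hq
      set r := h * j % k with hr
      have hqr : k * q + r = h * j := Nat.div_add_mod _ _
      have hrk : r < k := Nat.mod_lt _ hk
      have hr0 : r ≠ 0 := fun h0 => hnd (Nat.dvd_of_mod_eq_zero h0)
      have hjk : h * j ≤ h * (2 * k - 1) := Nat.mul_le_mul_left h hj2
      have hj2k : j ≤ 2 * k := by omega
      have hq2h : q < 2 * h := by
        have h1 : k * q ≤ h * j := by omega
        have h2 : h * (2 * k - 1) < k * (2 * h) := by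
          have e : k * (2 * h) = h * (2 * k) := by ring
          have e2 : h * (2 * k - 1) = h * (2 * k) - h * 1 := Nat.mul_sub h (2*k) 1
          omega
        have : k * q < k * (2 * h) := by omega
        exact Nat.lt_of_mul_lt_mul_left this
      have hmulsub : h * (2 * k - j) = 2 * (h * k) - h * j := by
        rw [Nat.mul_sub]; ring_nf
      have hdiv2 : h * (2 * k - j) / k = 2 * h - 1 - q := by
        have e1 : h * (2 * k - j) = k * (2 * h - 1 - q) + (k - r) := by
          rw [hmulsub]
          have hhk : h * j ≤ 2 * (h * k) := by
            have := Nat.mul_le_mul_left h hj2k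
            calc h * j ≤ h * (2 * k) := this
              _ = 2 * (h * k) := by ring
          zify [hhk, hrk.le, (by omega : q ≤ 2 * h - 1), (by omega : 1 ≤ 2 * h)]
          have hqrZ : (k : ℤ) * q + r = h * j := by exact_mod_cast hqr
          linarith [hqrZ]
        rw [e1, Nat.mul_add_div hk, Nat.div_eq_of_lt (by omega)]
        omega
      simp only [hfdef, hdiv2]
      have hparsum : (j + 1 + q) + ((2 * k - j) + 1 + (2 * h - 1 - q)) = 2 * k + 2 * h + 1 := by
        omega
      rcases Nat.even_or_odd (j + 1 + q) with he | he
      · have ho : Odd ((2 * k - j) + 1 + (2 * h - 1 - q)) := by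
          rw [Nat.even_iff] at he; rw [Nat.odd_iff]; omega
        rw [he.neg_one_pow, ho.neg_one_pow]; ring
      · have ho : Even ((2 * k - j) + 1 + (2 * h - 1 - q)) := by
          rw [Nat.odd_iff] at he; rw [Nat.even_iff]; omega
        rw [he.neg_one_pow, ho.neg_one_pow]; ring
    · -- f a ≠ 0 → g a ≠ a
      intro j hj _
      rw [Finset.mem_filter, Finset.mem_Icc] at hj
      intro heq
      have : j = k := by omega
      subst this
      exact hj.2 ⟨h, by ring⟩
    · -- g_mem
      intro j hj
      rw [Finset.mem_filter, Finset.mem_Icc] at hj ⊢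
      obtain ⟨⟨hj1, hj2⟩, hnd⟩ := hj
      refine ⟨⟨by omega, by omega⟩, ?_⟩
      intro hdvd
      apply hnd
      have hmulsub : h * (2 * k - j) = 2 * (h * k) - h * j := by
        rw [Nat.mul_sub]; ring_nf
      have hhk : h * j ≤ 2 * (h * k) := by
        have := Nat.mul_le_mul_left h (by omega : j ≤ 2 * k)
        calc h * j ≤ h * (2 * k) := this
          _ = 2 * (h * k) := by ring
      have hdvd2 : k ∣ 2 * (h * k) := ⟨2 * h, by ring⟩
      have := Nat.dvd_sub hdvd2 (hmulsub ▸ hdvd)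
      rwa [Nat.sub_sub_self hhk] at this
    · -- involutive
      intro j hj
      rw [Finset.mem_filter, Finset.mem_Icc] at hj
      omega
  rw [hsum1, hsum2]
  have : ((2 * d - 1 : ℕ) : ℤ) = 2 * d - 1 := by
    push_cast [Nat.cast_sub (by omega : 1 ≤ 2 * d)]
    ring
  rw [this]
  ring
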